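/- The number of set partitions of [n] (n ≥ 2) avoiding both patterns 1/23 and 13/2/4 is 2(n−1). -/
import Mathlib


/-- The set partition `σ` of `[n]` (as an equivalence relation on `Fin n`)
contains the pattern `π` (a set partition of `[k]`): some increasing choice of
`k` elements of `[n]` has the same same-block relation as `π`. -/
def SContains {n k : ℕ} (σ : Setoid (Fin n)) (π : Setoid (Fin k)) : Prop :=
  ∃ f : Fin k → Fin n, StrictMono f ∧ ∀ a b : Fin k, σ.r (f a) (f b) ↔ π.r a b

/-- The set partition associated to an RGF word: `i` and `j` are in the same
block iff the letters agree. -/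
def pat (l : List ℕ) : Setoid (Fin l.length) := Setoid.ker l.get

namespace Stmt12Aux
variable {n : ℕ}

def SP (P : Fin n → Prop) : Setoid (Fin n) :=
  ⟨fun x y => x = y ∨ (P x ∧ P y),
   ⟨fun _ => Or.inl rfl,
    by rintro x y (rfl | ⟨h1, h2⟩)
       · exact Or.inl rfl
       · exact Or.inr ⟨h2, h1⟩,
    by rintro x y z (rfl | ⟨h1, h2⟩) h
       · exact h
       · rcases h with rfl | ⟨h3, h4⟩
         · exact Or.inr ⟨h1, h2⟩
         · exact Or.inr ⟨h1, h4⟩⟩⟩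

lemma SP_r {P : Fin n → Prop} {x y : Fin n} :
    (SP P).r x y ↔ (x = y ∨ (P x ∧ P y)) := Iff.rfl

lemma SP_congr {P P' : Fin n → Prop} (h : ∀ x, P x ↔ P' x) : SP P = SP P' := by
  have : P = P' := funext fun x => propext (h x)
  rw [this]

lemma SP_mem {P : Fin n → Prop} {z x : Fin n} (hz : P z) :
    (SP P).r z x ↔ P x := by
  rw [SP_r]
  constructor
  · rintro (rfl | ⟨_, hx⟩) <;> assumption
  · intro hx; exact Or.inr ⟨hz, hx⟩

lemma SP_inj {P P' : Fin n → Prop} {z : Fin n} (hz : P z) (hz' : P' z)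
    (h : SP P = SP P') (x : Fin n) : P x ↔ P' x := by
  have := Setoid.ext_iff.mp h z x
  rw [show ((SP P) z x) = (SP P).r z x from rfl,
      show ((SP P') z x) = (SP P').r z x from rfl, SP_mem hz, SP_mem hz'] at this
  exact this

lemma pat_r {l : List ℕ} {a b : Fin l.length} :
    (pat l).r a b ↔ l.get a = l.get b := Iff.rfl

lemma sm3 {a b c : Fin n} (h1 : a < b) (h2 : b < c) : StrictMono ![a,b,c] := by
  intro i j hij
  fin_cases i <;> fin_cases j <;>
    first
      | exact absurd hij (by decide)
      | exact h1
      | exact h2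
      | exact h1.trans h2

lemma sm4 {a b c d : Fin n} (h1 : a < b) (h2 : b < c) (h3 : c < d) :
    StrictMono ![a,b,c,d] := by
  intro i j hij
  fin_cases i <;> fin_cases j <;>
    first
      | exact absurd hij (by decide)
      | exact h1
      | exact h2
      | exact h3
      | exact h1.trans h2
      | exact h2.trans h3
      | exact (h1.trans h2).trans h3

/-- From avoiding [1,2,2]: a<b<c and b~c imply a~b. -/
lemma K1 {σ : Setoid (Fin n)} (h : ¬ SContains σ (pat [1,2,2]))
    {a b c : Fin n} (h1 : a < b) (h2 : b < c) (hbc : σ.r b c) : σ.r a b := by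
  by_contra hab
  have hac : ¬ σ.r a c := fun h' => hab (σ.iseqv.trans h' (σ.iseqv.symm hbc))
  refine h ⟨![a,b,c], sm3 h1 h2, ?_⟩
  intro i j
  fin_cases i <;> fin_cases j
  · exact iff_of_true (σ.iseqv.refl a) (pat_r.mpr (by decide))
  · exact iff_of_false hab (by rw [pat_r]; decide)
  · exact iff_of_false hac (by rw [pat_r]; decide)
  · exact iff_of_false (fun h' => hab (σ.iseqv.symm h')) (by rw [pat_r]; decide)
  · exact iff_of_true (σ.iseqv.refl b) (pat_r.mpr (by decide))
  · exact iff_of_true hbc (pat_r.mpr (by decide))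
  · exact iff_of_false (fun h' => hac (σ.iseqv.symm h')) (by rw [pat_r]; decide)
  · exact iff_of_true (σ.iseqv.symm hbc) (pat_r.mpr (by decide))
  · exact iff_of_true (σ.iseqv.refl c) (pat_r.mpr (by decide))

/-- From avoiding [1,2,1,3]: no a<b<c<d with a~c, a≁b, a≁d, b≁d. -/
lemma K2 {σ : Setoid (Fin n)} (h : ¬ SContains σ (pat [1,2,1,3]))
    {a b c d : Fin n} (h1 : a < b) (h2 : b < c) (h3 : c < d)
    (hac : σ.r a c) (hab : ¬ σ.r a b) (had : ¬ σ.r a d) (hbd : ¬ σ.r b d) :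
    False := by
  have hbc : ¬ σ.r b c := fun h' => hab (σ.iseqv.trans hac (σ.iseqv.symm h'))
  have hcd : ¬ σ.r c d := fun h' => had (σ.iseqv.trans hac h')
  refine h ⟨![a,b,c,d], sm4 h1 h2 h3, ?_⟩
  intro i j
  fin_cases i <;> fin_cases j
  · exact iff_of_true (σ.iseqv.refl a) (pat_r.mpr (by decide))
  · exact iff_of_false hab (by rw [pat_r]; decide)
  · exact iff_of_true hac (pat_r.mpr (by decide))
  · exact iff_of_false had (by rw [pat_r]; decide)
  · exact iff_of_false (fun h' => hab (σ.iseqv.symm h')) (by rw [pat_r]; decide)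
  · exact iff_of_true (σ.iseqv.refl b) (pat_r.mpr (by decide))
  · exact iff_of_false hbc (by rw [pat_r]; decide)
  · exact iff_of_false hbd (by rw [pat_r]; decide)
  · exact iff_of_true (σ.iseqv.symm hac) (pat_r.mpr (by decide))
  · exact iff_of_false (fun h' => hbc (σ.iseqv.symm h')) (by rw [pat_r]; decide)
  · exact iff_of_true (σ.iseqv.refl c) (pat_r.mpr (by decide))
  · exact iff_of_false hcd (by rw [pat_r]; decide)
  · exact iff_of_false (fun h' => had (σ.iseqv.symm h')) (by rw [pat_r]; decide)
  · exact iff_of_false (fun h' => hbd (σ.iseqv.symm h')) (by rw [pat_r]; decide)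
  · exact iff_of_false (fun h' => hcd (σ.iseqv.symm h')) (by rw [pat_r]; decide)
  · exact iff_of_true (σ.iseqv.refl d) (pat_r.mpr (by decide))


lemma avoid122 {P : Fin n → Prop}
    (hC1 : ∀ a b c : Fin n, a < b → b < c → P b → P c → P a) :
    ¬ SContains (SP P) (pat [1,2,2]) := by
  rintro ⟨f, hmono, hf⟩
  have h12 : (SP P).r (f ⟨1, by norm_num⟩) (f ⟨2, by norm_num⟩) :=
    (hf _ _).mpr (pat_r.mpr (by decide))
  have h01 : f (⟨0, by norm_num⟩ : Fin 3) < f ⟨1, by norm_num⟩ := hmono (by decide)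
  have h12' : f (⟨1, by norm_num⟩ : Fin 3) < f ⟨2, by norm_num⟩ := hmono (by decide)
  rcases SP_r.mp h12 with h | ⟨hp1, hp2⟩
  · exact absurd h (ne_of_lt h12')
  · have hp0 : P (f ⟨0, by norm_num⟩) := hC1 _ _ _ h01 h12' hp1 hp2
    exact absurd (pat_r.mp ((hf _ _).mp (Or.inr ⟨hp0, hp1⟩))) (by decide)

lemma avoid1213 {P : Fin n → Prop}
    (hC2 : ∀ a b c d : Fin n, a < b → b < c → c < d → P a → P c → P b ∨ P d) :
    ¬ SContains (SP P) (pat [1,2,1,3]) := by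
  rintro ⟨f, hmono, hf⟩
  have h02 : (SP P).r (f ⟨0, by norm_num⟩) (f ⟨2, by norm_num⟩) :=
    (hf _ _).mpr (pat_r.mpr (by decide))
  have l01 : f (⟨0, by norm_num⟩ : Fin 4) < f ⟨1, by norm_num⟩ := hmono (by decide)
  have l12 : f (⟨1, by norm_num⟩ : Fin 4) < f ⟨2, by norm_num⟩ := hmono (by decide)
  have l23 : f (⟨2, by norm_num⟩ : Fin 4) < f ⟨3, by norm_num⟩ := hmono (by decide)
  rcases SP_r.mp h02 with h | ⟨hp0, hp2⟩
  · exact absurd h (ne_of_lt (l01.trans l12))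
  · rcases hC2 _ _ _ _ l01 l12 l23 hp0 hp2 with hb | hd
    · exact absurd (pat_r.mp ((hf _ _).mp (Or.inr ⟨hp0, hb⟩))) (by decide)
    · exact absurd (pat_r.mp ((hf _ _).mp (Or.inr ⟨hp0, hd⟩))) (by decide)



lemma classify {σ : Setoid (Fin n)} (hn : 1 ≤ n)
    (h1 : ¬ SContains σ (pat [1,2,2])) (h2 : ¬ SContains σ (pat [1,2,1,3])) :
    ∃ P : Fin n → Prop,
      σ = SP P ∧ P ⟨0, by omega⟩ ∧
      (∀ a b c : Fin n, a < b → b < c → P b → P c → P a) ∧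
      (∀ a b c d : Fin n, a < b → b < c → c < d → P a → P c → P b ∨ P d) := by
  set z : Fin n := ⟨0, by omega⟩ with hz
  set P : Fin n → Prop := fun x => σ.r z x with hP
  have hPz : P z := σ.iseqv.refl z
  have key : ∀ x y : Fin n, x < y → σ.r x y → P x ∧ P y := by
    intro x y hxy hr
    rcases eq_or_lt_of_le (show z ≤ x from Fin.mk_le_of_le_val (Nat.zero_le _)) with hzx | hzx
    · refine ⟨hzx ▸ hPz, ?_⟩
      show σ.r z y
      rw [hzx]
      exact hr
    · have hx : σ.r z x := K1 h1 hzx hxy hr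
      exact ⟨hx, σ.iseqv.trans hx hr⟩
  have σ_eq : ∀ x y : Fin n, σ.r x y ↔ (x = y ∨ (P x ∧ P y)) := by
    intro x y
    constructor
    · intro hr
      rcases lt_trichotomy x y with hxy | hxy | hxy
      · exact Or.inr (key x y hxy hr)
      · exact Or.inl hxy
      · exact Or.inr (And.symm (key y x hxy (σ.iseqv.symm hr)))
    · rintro (rfl | ⟨hx, hy⟩)
      · exact σ.iseqv.refl x
      · exact σ.iseqv.trans (σ.iseqv.symm hx) hy
  refine ⟨P, Setoid.ext fun x y => σ_eq x y, hPz, ?_, ?_⟩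
  · intro a b c hab hbc hPb hPc
    have hrbc : σ.r b c := σ.iseqv.trans (σ.iseqv.symm hPb) hPc
    have hrab : σ.r a b := K1 h1 hab hbc hrbc
    exact σ.iseqv.trans hPb (σ.iseqv.symm hrab)
  · intro a b c d hab hbc hcd hPa hPc
    by_contra hcon
    push_neg at hcon
    obtain ⟨hPb, hPd⟩ := hcon
    have hrac : σ.r a c := σ.iseqv.trans (σ.iseqv.symm hPa) hPc
    have hrab : ¬ σ.r a b := fun h' => hPb (σ.iseqv.trans hPa h')
    have hrad : ¬ σ.r a d := fun h' => hPd (σ.iseqv.trans hPa h')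
    have hrbd : ¬ σ.r b d := fun h' => hrab (K1 h1 hab (hbc.trans hcd) h')
    exact K2 h2 hab hbc hcd hrac hrab hrad hrbd


def PA (n : ℕ) (j : Fin n) : Fin n → Prop := fun x => x.val ≤ j.val

def PB (n : ℕ) (t : Fin (n-2)) : Fin n → Prop :=
  fun x => x.val ≤ t.val ∨ x.val = n - 1

def G (n : ℕ) : Fin n ⊕ Fin (n-2) → Setoid (Fin n) :=
  Sum.elim (fun j => SP (PA n j)) (fun t => SP (PB n t))

lemma G_avoid (i : Fin n ⊕ Fin (n-2)) :
    ¬ SContains (G n i) (pat [1,2,2]) ∧ ¬ SContains (G n i) (pat [1,2,1,3]) := by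
  cases i with
  | inl j =>
    constructor
    · apply avoid122
      intro a b c hab hbc hb hc
      rw [Fin.lt_def] at hab hbc
      simp only [PA] at *
      omega
    · apply avoid1213
      intro a b c d hab hbc hcd ha hc
      rw [Fin.lt_def] at hab hbc hcd
      simp only [PA] at *
      omega
  | inr t =>
    constructor
    · apply avoid122
      intro a b c hab hbc hb hc
      rw [Fin.lt_def] at hab hbc
      have := c.isLt
      simp only [PB] at *
      omega
    · apply avoid1213
      intro a b c d hab hbc hcd ha hc
      rw [Fin.lt_def] at hab hbc hcd
      have := d.isLt
      simp only [PB] at *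
      omega

lemma G_inj (hn : 2 ≤ n) : Function.Injective (G n) := by
  have hz : (0 : ℕ) < n := by omega
  intro i i' h
  cases i with
  | inl j =>
    cases i' with
    | inl j' =>
      have hiff := SP_inj (z := ⟨0, hz⟩) (P := PA n j) (P' := PA n j')
        (Nat.zero_le _) (Nat.zero_le _) h
      have h1 := hiff j
      have h2 := hiff j'
      simp only [PA] at h1 h2
      exact congrArg Sum.inl (Fin.ext (le_antisymm (h1.mp le_rfl) (h2.mpr le_rfl)))
    | inr t =>
      exfalso
      have hiff := SP_inj (z := ⟨0, hz⟩) (P := PA n j) (P' := PB n t)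
        (Nat.zero_le _) (Or.inl (Nat.zero_le _)) h
      have ht := t.isLt
      have h1 := hiff ⟨n-1, by omega⟩
      have h2 := hiff ⟨t.val+1, by omega⟩
      have hj := j.isLt
      simp only [PA, PB, Fin.val_mk] at h1 h2
      have ha : n - 1 ≤ j.val := h1.mpr (Or.inr trivial)
      have hb : t.val + 1 ≤ t.val ∨ t.val + 1 = n - 1 := h2.mp (by omega)
      omega
  | inr t =>
    cases i' with
    | inl j =>
      exfalso
      have hiff := SP_inj (z := ⟨0, hz⟩) (P := PB n t) (P' := PA n j)
        (Or.inl (Nat.zero_le _)) (Nat.zero_le _) h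
      have ht := t.isLt
      have h1 := hiff ⟨n-1, by omega⟩
      have h2 := hiff ⟨t.val+1, by omega⟩
      have hj := j.isLt
      simp only [PA, PB, Fin.val_mk] at h1 h2
      have ha : n - 1 ≤ j.val := h1.mp (Or.inr trivial)
      have hb : t.val + 1 ≤ t.val ∨ t.val + 1 = n - 1 := h2.mpr (by omega)
      omega
    | inr t' =>
      have hiff := SP_inj (z := ⟨0, hz⟩) (P := PB n t) (P' := PB n t')
        (Or.inl (Nat.zero_le _)) (Or.inl (Nat.zero_le _)) h
      have ht := t.isLt
      have ht' := t'.isLt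
      have h1 := hiff ⟨t.val, by omega⟩
      have h2 := hiff ⟨t'.val, by omega⟩
      simp only [PB, Fin.val_mk] at h1 h2
      have ha := h1.mp (Or.inl le_rfl)
      have hb := h2.mpr (Or.inl le_rfl)
      exact congrArg Sum.inr (Fin.ext (by omega))

lemma G_surj (hn : 2 ≤ n) (σ : Setoid (Fin n))
    (h1 : ¬ SContains σ (pat [1,2,2])) (h2 : ¬ SContains σ (pat [1,2,1,3])) :
    ∃ i, G n i = σ := by
  obtain ⟨P, hσ, hP0, hC1, hC2⟩ := classify (by omega) h1 h2
  classical
  have hQ0 : ∃ h : 0 < n, P ⟨0, h⟩ := ⟨by omega, hP0⟩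
  set m := Nat.findGreatest (fun k => ∃ h : k < n, P ⟨k, h⟩) (n-1) with hm
  have hmQ : ∃ h : m < n, P ⟨m, h⟩ := by
    have := Nat.findGreatest_spec (P := fun k => ∃ h : k < n, P ⟨k, h⟩)
      (Nat.zero_le (n-1)) hQ0
    rw [← hm] at this
    exact this
  have hmle : m ≤ n - 1 := Nat.findGreatest_le _
  have hmax : ∀ k, (∃ h : k < n, P ⟨k, h⟩) → k ≤ m := by
    intro k hk
    exact Nat.le_findGreatest (by obtain ⟨h, _⟩ := hk; omega) hk
  obtain ⟨hmlt, hPm⟩ := hmQ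
  by_cases hdc : ∀ x : Fin n, x.val ≤ m → P x
  · refine ⟨Sum.inl ⟨m, hmlt⟩, ?_⟩
    rw [hσ]
    exact SP_congr fun x => ⟨fun hx => hdc x hx, fun hx => hmax x.val ⟨x.isLt, by rwa [Fin.eta]⟩⟩
  · push_neg at hdc
    obtain ⟨b, hbm, hPb⟩ := hdc
    have hb0 : 0 < b.val := by
      rcases Nat.eq_zero_or_pos b.val with h | h
      · exact absurd (show P b by rwa [show b = ⟨0, by omega⟩ from Fin.ext h]) hPb
      · exact h
    have hbm' : b.val < m :=
      lt_of_le_of_ne hbm (fun h => hPb (by rwa [show b = (⟨m, hmlt⟩ : Fin n) from Fin.ext h]))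
    have hmtop : m = n - 1 := by
      by_contra hne
      have hm1 : m + 1 < n := by omega
      have hPm1 : ¬ P ⟨m+1, hm1⟩ := fun hp => absurd (hmax (m+1) ⟨hm1, hp⟩) (by omega)
      rcases hC2 ⟨0, by omega⟩ b ⟨m, hmlt⟩ ⟨m+1, hm1⟩
        (by rw [Fin.lt_def]; exact hb0) (by rw [Fin.lt_def]; exact hbm')
        (by simp only [Fin.lt_def, Fin.val_mk]; omega) hP0 hPm with h | h
      · exact hPb h
      · exact hPm1 h
    have hex : ∃ k, ∃ h : k < n, ¬ P ⟨k, h⟩ := ⟨b.val, b.isLt, by rwa [Fin.eta]⟩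
    set c0 := Nat.find hex with hc0
    obtain ⟨hc0lt, hPc0⟩ := Nat.find_spec hex
    have hc0min : ∀ k (h : k < n), k < c0 → P ⟨k, h⟩ := by
      intro k h hk
      by_contra hnk
      exact absurd (Nat.find_min' hex ⟨h, hnk⟩) (by omega)
    have hc0le : c0 ≤ b.val := Nat.find_min' hex ⟨b.isLt, by rwa [Fin.eta]⟩
    have hc0pos : 0 < c0 := by
      rcases Nat.eq_zero_or_pos c0 with h | h
      · exact absurd (show P ⟨c0, hc0lt⟩ by
          rw [show (⟨c0, hc0lt⟩ : Fin n) = ⟨0, by omega⟩ from Fin.ext h]; exact hP0) hPc0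
      · exact h
    have hn3 : 3 ≤ n := by omega
    refine ⟨Sum.inr ⟨c0 - 1, by omega⟩, ?_⟩
    rw [hσ]
    refine SP_congr fun x => ?_
    show (x.val ≤ c0 - 1 ∨ x.val = n - 1) ↔ P x
    constructor
    · rintro (hx | hx)
      · have hxl : x.val < c0 := by omega
        have := hc0min x.val x.isLt hxl
        rwa [Fin.eta] at this
      · rw [show x = (⟨m, hmlt⟩ : Fin n) from Fin.ext (by simp only [Fin.val_mk]; omega)]
        exact hPm
    · intro hx
      by_contra hcon
      push_neg at hcon
      obtain ⟨hx1, hx2⟩ := hcon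
      have hxc : x.val ≠ c0 :=
        fun h => hPc0 (by rwa [show (⟨c0, hc0lt⟩ : Fin n) = x from Fin.ext h.symm])
      have hcx : c0 < x.val := by omega
      have hxn : x.val < n - 1 := by
        have := x.isLt
        omega
      exact hPc0 (hC1 ⟨c0, hc0lt⟩ x ⟨n-1, by omega⟩
        (by rw [Fin.lt_def]; exact hcx) (by rw [Fin.lt_def]; exact hxn) hx
        (by rw [show (⟨n-1, by omega⟩ : Fin n) = ⟨m, hmlt⟩ from Fin.ext (by simp only [Fin.val_mk]; omega)]; exact hPm))

end Stmt12Aux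

theorem stmt12 (n : ℕ) (hn : 2 ≤ n) :
    Nat.card {σ : Setoid (Fin n) //
      ¬ SContains σ (pat [1, 2, 2]) ∧ ¬ SContains σ (pat [1, 2, 1, 3])} =
    2 * (n - 1) := by
  have hbij : Function.Bijective
      (fun i : Fin n ⊕ Fin (n-2) =>
        (⟨Stmt12Aux.G n i, (Stmt12Aux.G_avoid i).1, (Stmt12Aux.G_avoid i).2⟩ :
          {σ : Setoid (Fin n) //
            ¬ SContains σ (pat [1, 2, 2]) ∧ ¬ SContains σ (pat [1, 2, 1, 3])})) := by
    constructor
    · intro i i' h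
      exact Stmt12Aux.G_inj hn (congrArg Subtype.val h)
    · rintro ⟨σ, hσ1, hσ2⟩
      obtain ⟨i, hi⟩ := Stmt12Aux.G_surj hn σ hσ1 hσ2
      exact ⟨i, Subtype.ext hi⟩
  rw [← Nat.card_eq_of_bijective _ hbij, Nat.card_sum,
    Nat.card_eq_fintype_card, Nat.card_eq_fintype_card, Fintype.card_fin, Fintype.card_fin]
  omega
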